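/- Let f(s) = −e^{−s²}/(√π · erf(s)) for s > 0. Then f satisfies, for all s > 0, the second-order second-degree differential equation [s f″ + 2 f′ + 8 s f + 24 s² f²]² = 4 (s + 2f)² [(f + s f′)² + 8 s² f² + 16 s³ f³]. -/

import Mathlib

/-- The error function `erf s = (2/√π) ∫_0^s e^{-t²} dt`. -/
noncomputable def erf (s : ℝ) : ℝ :=
  2 / Real.sqrt Real.pi * ∫ t in (0:ℝ)..s, Real.exp (-t ^ 2)

/-- The `N = 1` GUE off-diagonal resolvent quantity `R̃(s) = −e^{−s²}/(√π · erf(s))`. -/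
noncomputable def f (s : ℝ) : ℝ := -(Real.exp (-s ^ 2) / (Real.sqrt Real.pi * erf s))

lemma hasDerivAt_erf (s : ℝ) :
    HasDerivAt erf (2 / Real.sqrt Real.pi * Real.exp (-s ^ 2)) s := by
  have hcont : Continuous fun t : ℝ => Real.exp (-t ^ 2) := by continuity
  have h : HasDerivAt (fun u => ∫ t in (0:ℝ)..u, Real.exp (-t ^ 2))
      (Real.exp (-s ^ 2)) s := by
    exact intervalIntegral.integral_hasDerivAt_right
      (hcont.intervalIntegrable 0 s) (hcont.stronglyMeasurableAtFilter _ _)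
      hcont.continuousAt
  exact h.const_mul (2 / Real.sqrt Real.pi)

lemma erf_pos {s : ℝ} (hs : 0 < s) : 0 < erf s := by
  have hint : 0 < ∫ t in (0:ℝ)..s, Real.exp (-t ^ 2) := by
    apply intervalIntegral.intervalIntegral_pos_of_pos_on
    · exact (by continuity : Continuous fun t : ℝ => Real.exp (-t ^ 2)).intervalIntegrable 0 s
    · intro x _; exact Real.exp_pos _
    · exact hs
  have hpi : 0 < Real.sqrt Real.pi := Real.sqrt_pos.mpr Real.pi_pos
  exact mul_pos (by positivity) hint

lemma hasDerivAt_f {s : ℝ} (hs : 0 < s) :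
    HasDerivAt f (2 * (f s) ^ 2 - 2 * s * f s) s := by
  have hpi : 0 < Real.sqrt Real.pi := Real.sqrt_pos.mpr Real.pi_pos
  have hE : 0 < erf s := erf_pos hs
  have hD : Real.sqrt Real.pi * erf s ≠ 0 := by positivity
  have hnum : HasDerivAt (fun u : ℝ => Real.exp (-u ^ 2))
      (-2 * s * Real.exp (-s ^ 2)) s := by
    have h1 : HasDerivAt (fun u : ℝ => -u ^ 2) (-(2 * s)) s := by
      exact (hasDerivAt_pow 2 s).neg.congr_deriv (by norm_num)
    simpa [mul_comm] using h1.exp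
  have hden : HasDerivAt (fun u => Real.sqrt Real.pi * erf u)
      (2 * Real.exp (-s ^ 2)) s := by
    have := (hasDerivAt_erf s).const_mul (Real.sqrt Real.pi)
    have hne : Real.sqrt Real.pi ≠ 0 := ne_of_gt hpi
    refine this.congr_deriv ?_
    field_simp
  have h := (hnum.div hden hD).neg
  refine (h : HasDerivAt f _ s).congr_deriv ?_
  have hfs : f s = -(Real.exp (-s ^ 2) / (Real.sqrt Real.pi * erf s)) := rfl
  rw [hfs]
  field_simp
  ring

lemma deriv_f_eq {s : ℝ} (hs : 0 < s) :
    deriv f s = 2 * (f s) ^ 2 - 2 * s * f s := (hasDerivAt_f hs).deriv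

lemma deriv_deriv_f_eq {s : ℝ} (hs : 0 < s) :
    deriv (deriv f) s =
      (4 * f s - 2 * s) * (2 * (f s) ^ 2 - 2 * s * f s) - 2 * f s := by
  have hev : deriv f =ᶠ[nhds s] fun u => 2 * (f u) ^ 2 - 2 * u * f u := by
    filter_upwards [isOpen_Ioi.mem_nhds (show s ∈ Set.Ioi (0:ℝ) from hs)] with u hu
    exact deriv_f_eq hu
  rw [hev.deriv_eq]
  have hf := hasDerivAt_f hs
  have h1 : HasDerivAt (fun u => 2 * (f u) ^ 2 - 2 * u * f u)
      (2 * (2 * f s * (2 * (f s) ^ 2 - 2 * s * f s)) -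
        (2 * f s + 2 * s * (2 * (f s) ^ 2 - 2 * s * f s))) s := by
    have hsq : HasDerivAt (fun u => (f u) ^ 2)
        (2 * f s * (2 * (f s) ^ 2 - 2 * s * f s)) s := by
      exact (hf.pow 2).congr_deriv (by norm_num <;> ring)
    have h2 : HasDerivAt (fun u : ℝ => 2 * u)
        (2 : ℝ) s := by simpa using (hasDerivAt_id s).const_mul 2
    exact (hsq.const_mul 2).sub (h2.mul hf)
  rw [h1.deriv]
  ring

theorem gue_N1_Rtilde_ode :
    ∀ s > (0:ℝ),
      (s * deriv (deriv f) s + 2 * deriv f s + 8 * s * f s + 24 * s ^ 2 * (f s) ^ 2) ^ 2 =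
        4 * (s + 2 * f s) ^ 2 *
          ((f s + s * deriv f s) ^ 2 + 8 * s ^ 2 * (f s) ^ 2 + 16 * s ^ 3 * (f s) ^ 3) := by
  intro s hs
  rw [deriv_f_eq hs, deriv_deriv_f_eq hs]
  ring
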